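/- Let E ⊆ ℂ^a ⊗ ℂ^b be a linear space of matrices written in block form E = [[0, H],[G, D]] where the top-left κ×κ' block is identically zero, and suppose G is a 1-generic (E1-generic) space of matrices of size s×κ'. If every (r+1)×(r+1) minor of E formed from one entry of G and an r×r minor of H must vanish or share a common factor as dictated by codim(E_r) ≤ n, and κ' ≥ r+1 > s, then either codim_G(G_{s−1}) ≤ n or codim_H(H_{r−s}) ≤ n. -/

import Mathlib

open MvPolynomial Matrix

section RankLemma

lemma stmt16_rank_add_rank_le_rank_fromBlocks {F : Type*} [Field F]
    {m n s t : Type*} [Fintype m] [Fintype n] [Fintype s] [Fintype t]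
    (B : Matrix m t F) (C : Matrix s n F) (D : Matrix s t F) :
    C.rank + B.rank ≤ (fromBlocks (0 : Matrix m n F) B C D).rank := by
  classical
  set f := (fromBlocks (0 : Matrix m n F) B C D).mulVecLin with hf
  set W := LinearMap.range f with hW
  set π : ((m ⊕ s) → F) →ₗ[F] (m → F) := LinearMap.funLeft F F Sum.inl with hπ
  set g := π.domRestrict W with hg
  have key : Module.finrank F (LinearMap.range g) + Module.finrank F (LinearMap.ker g)
      = Module.finrank F W := LinearMap.finrank_range_add_finrank_ker g
  have h1 : B.rank ≤ Module.finrank F (LinearMap.range g) := by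
    have hle : LinearMap.range B.mulVecLin ≤ LinearMap.range g := by
      rintro y ⟨w, rfl⟩
      refine ⟨⟨f (Sum.elim 0 w), ⟨_, rfl⟩⟩, ?_⟩
      show π (f (Sum.elim 0 w)) = B.mulVecLin w
      simp [hf, hπ, Matrix.fromBlocks_mulVec, Matrix.mulVecLin_apply]
      ext i
      simp [LinearMap.funLeft]
    exact Submodule.finrank_mono hle
  have h2 : C.rank ≤ Module.finrank F (LinearMap.ker g) := by
    set ρ : W →ₗ[F] (s → F) := (LinearMap.funLeft F F Sum.inr).comp W.subtype with hρ
    have hle : LinearMap.range C.mulVecLin ≤ Submodule.map ρ (LinearMap.ker g) := by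
      rintro y ⟨v, rfl⟩
      have hmem : f (Sum.elim v 0) ∈ W := ⟨_, rfl⟩
      refine ⟨⟨f (Sum.elim v 0), hmem⟩, ?_, ?_⟩
      · show π (f (Sum.elim v 0)) = 0
        ext i
        simp [hf, hπ, Matrix.fromBlocks_mulVec, Matrix.mulVecLin_apply, LinearMap.funLeft]
      · show (f (Sum.elim v 0)) ∘ Sum.inr = C.mulVecLin v
        ext i
        simp [hf, Matrix.fromBlocks_mulVec, Matrix.mulVecLin_apply, LinearMap.funLeft]
    calc C.rank ≤ Module.finrank F (Submodule.map ρ (LinearMap.ker g)) :=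
          Submodule.finrank_mono hle
      _ ≤ Module.finrank F (LinearMap.ker g) := Submodule.finrank_map_le ρ _
  calc C.rank + B.rank
      ≤ Module.finrank F (LinearMap.ker g) + Module.finrank F (LinearMap.range g) :=
        Nat.add_le_add h2 h1
    _ = Module.finrank F W := by rw [Nat.add_comm]; exact key
    _ = (fromBlocks (0 : Matrix m n F) B C D).rank := rfl

end RankLemma

section Fiber

open Polynomial

variable {R : Type*} [CommRing R] [IsDomain R]

/-- The multiplicative set of nonzero constants in `R[X]`. -/
noncomputable def stmt16ConstSubmonoid (R : Type*) [CommRing R] [IsDomain R] : Submonoid R[X] :=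
  (nonZeroDivisors R).map (Polynomial.C : R →+* R[X])

noncomputable instance stmt16AlgebraPoly : Algebra R[X] (FractionRing R)[X] :=
  (Polynomial.mapRingHom (algebraMap R (FractionRing R))).toAlgebra

lemma stmt16_algebraMap_eq : (algebraMap R[X] (FractionRing R)[X]) =
    Polynomial.mapRingHom (algebraMap R (FractionRing R)) := rfl

instance stmt16_isLocalization :
    IsLocalization (stmt16ConstSubmonoid R) (FractionRing R)[X] where
  map_units := by
    rintro ⟨y, a, ha, rfl⟩
    rw [stmt16_algebraMap_eq]
    simp only [coe_mapRingHom, Polynomial.map_C]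
    refine (Polynomial.isUnit_C).2 (IsUnit.mk0 _ ?_)
    have : a ≠ 0 := nonZeroDivisors.ne_zero ha
    simpa using fun h => this (IsFractionRing.injective R (FractionRing R) (by simpa using h))
  surj := by
    intro z
    obtain ⟨b, hb⟩ := IsLocalization.integerNormalization_map_to_map (nonZeroDivisors R) z
    refine ⟨⟨IsLocalization.integerNormalization (nonZeroDivisors R) z,
      ⟨Polynomial.C (b : R), ⟨b, b.2, rfl⟩⟩⟩, ?_⟩
    rw [stmt16_algebraMap_eq]
    simp only [coe_mapRingHom, Polynomial.map_C]
    rw [hb, mul_comm, ← Polynomial.smul_eq_C_mul, algebraMap_smul]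
  exists_of_eq := by
    intro x y h
    refine ⟨1, ?_⟩
    have : Function.Injective (algebraMap R[X] (FractionRing R)[X]) := by
      rw [stmt16_algebraMap_eq]
      exact Polynomial.map_injective _ (IsFractionRing.injective R (FractionRing R))
    rw [this h]

/-- In `R[X]` over a domain, there is no chain of three primes all contracting to `⊥` in `R`. -/
lemma stmt16_no_three_primes_fiber (P Q T : Ideal R[X]) (hP : P.IsPrime) (hQ : Q.IsPrime)
    (hT : T.IsPrime) (h1 : P < Q) (h2 : Q < T)
    (hTc : T.comap (Polynomial.C : R →+* R[X]) = ⊥) : False := by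
  have hdisj : ∀ (I : Ideal R[X]), I.IsPrime → I ≤ T →
      Disjoint ((stmt16ConstSubmonoid R : Submonoid R[X]) : Set R[X]) (I : Set R[X]) := by
    intro I _ hIT
    rw [Set.disjoint_left]
    rintro x ⟨a, ha, rfl⟩ hx
    have : a ∈ T.comap (Polynomial.C : R →+* R[X]) := Ideal.mem_comap.2 (hIT hx)
    rw [hTc] at this
    exact nonZeroDivisors.ne_zero ha (by simpa using this)
  set K := FractionRing R
  set ψ := algebraMap R[X] K[X]
  have hPd := hdisj P hP (h1.le.trans h2.le)
  have hQd := hdisj Q hQ h2.le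
  have hTd := hdisj T hT le_rfl
  have hP' : (P.map ψ).IsPrime :=
    IsLocalization.isPrime_of_isPrime_disjoint (stmt16ConstSubmonoid R) _ P hP hPd
  have hQ' : (Q.map ψ).IsPrime :=
    IsLocalization.isPrime_of_isPrime_disjoint (stmt16ConstSubmonoid R) _ Q hQ hQd
  have hT' : (T.map ψ).IsPrime :=
    IsLocalization.isPrime_of_isPrime_disjoint (stmt16ConstSubmonoid R) _ T hT hTd
  have hcomapP : (P.map ψ).comap ψ = P :=
    IsLocalization.comap_map_of_isPrime_disjoint (stmt16ConstSubmonoid R) _ hP hPd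
  have hcomapQ : (Q.map ψ).comap ψ = Q :=
    IsLocalization.comap_map_of_isPrime_disjoint (stmt16ConstSubmonoid R) _ hQ hQd
  have hcomapT : (T.map ψ).comap ψ = T :=
    IsLocalization.comap_map_of_isPrime_disjoint (stmt16ConstSubmonoid R) _ hT hTd
  have l1 : P.map ψ < Q.map ψ := by
    refine lt_of_le_of_ne (Ideal.map_mono h1.le) (fun h => h1.ne ?_)
    rw [← hcomapP, ← hcomapQ, h]
  have l2 : Q.map ψ < T.map ψ := by
    refine lt_of_le_of_ne (Ideal.map_mono h2.le) (fun h => h2.ne ?_)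
    rw [← hcomapQ, ← hcomapT, h]
  have hQne : Q.map ψ ≠ ⊥ := by
    intro h
    rw [h] at l1
    exact (not_lt_bot l1)
  have hQmax : (Q.map ψ).IsMaximal := by
    have := hQ'
    exact IsPrime.to_maximal_ideal hQne
  exact hT'.ne_top (hQmax.1.2 _ l2)

end Fiber

section KeyLemma

open Polynomial

/-- Key lemma: `comap C` is strictly monotone along chains of primes of length two. -/
lemma stmt16_comap_C_lt_of_lt_of_lt {R : Type*} [CommRing R] (P Q T : Ideal R[X])
    (hP : P.IsPrime) (hQ : Q.IsPrime) (hT : T.IsPrime) (h1 : P < Q) (h2 : Q < T) :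
    P.comap (Polynomial.C : R →+* R[X]) < T.comap (Polynomial.C : R →+* R[X]) := by
  refine lt_of_le_of_ne (Ideal.comap_mono (h1.le.trans h2.le)) (fun heq => ?_)
  set p := P.comap (Polynomial.C : R →+* R[X]) with hp
  have hpprime : p.IsPrime := by
    have := hP; exact Ideal.IsPrime.comap (Polynomial.C : R →+* R[X])
  set R' := R ⧸ p
  have : IsDomain R' := Ideal.Quotient.isDomain p
  set φ : R[X] →+* R'[X] := Polynomial.mapRingHom (Ideal.Quotient.mk p) with hφ
  have hsurj : Function.Surjective φ := Polynomial.map_surjective _ Ideal.Quotient.mk_surjective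
  have hker : RingHom.ker φ ≤ P := by
    intro f hf
    have hcoeff : ∀ i, f.coeff i ∈ p := by
      intro i
      have : (f.map (Ideal.Quotient.mk p)).coeff i = 0 := by
        have h0 : φ f = 0 := RingHom.mem_ker.1 hf
        rw [show f.map (Ideal.Quotient.mk p) = φ f from rfl, h0]
        simp
      rw [Polynomial.coeff_map] at this
      exact Ideal.Quotient.eq_zero_iff_mem.1 this
    have : f = ∑ i ∈ f.support, Polynomial.C (f.coeff i) * Polynomial.X ^ i := by
      conv_lhs => rw [Polynomial.as_sum_support f]
      exact Finset.sum_congr rfl (fun i _ => (Polynomial.C_mul_X_pow_eq_monomial).symm)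
    rw [this]
    exact Ideal.sum_mem _ (fun i _ => Ideal.mul_mem_right _ _ (hcoeff i))
  have hkerQ : RingHom.ker φ ≤ Q := hker.trans h1.le
  have hkerT : RingHom.ker φ ≤ T := hkerQ.trans h2.le
  have hP' : (P.map φ).IsPrime := Ideal.map_isPrime_of_surjective hsurj hker
  have hQ' : (Q.map φ).IsPrime := Ideal.map_isPrime_of_surjective hsurj hkerQ
  have hT' : (T.map φ).IsPrime := Ideal.map_isPrime_of_surjective hsurj hkerT
  have hcP : (P.map φ).comap φ = P := by
    rw [Ideal.comap_map_of_surjective φ hsurj]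
    exact sup_eq_left.2 hker
  have hcQ : (Q.map φ).comap φ = Q := by
    rw [Ideal.comap_map_of_surjective φ hsurj]
    exact sup_eq_left.2 hkerQ
  have hcT : (T.map φ).comap φ = T := by
    rw [Ideal.comap_map_of_surjective φ hsurj]
    exact sup_eq_left.2 hkerT
  have l1 : P.map φ < Q.map φ :=
    lt_of_le_of_ne (Ideal.map_mono h1.le) (fun h => h1.ne (by rw [← hcP, ← hcQ, h]))
  have l2 : Q.map φ < T.map φ :=
    lt_of_le_of_ne (Ideal.map_mono h2.le) (fun h => h2.ne (by rw [← hcQ, ← hcT, h]))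
  have hTc : (T.map φ).comap (Polynomial.C : R' →+* R'[X]) = ⊥ := by
    refine le_antisymm ?_ bot_le
    intro a' ha'
    obtain ⟨a, rfl⟩ := Ideal.Quotient.mk_surjective a'
    have hCa : φ (Polynomial.C a) ∈ T.map φ := by
      have : (Polynomial.C : R' →+* R'[X]) (Ideal.Quotient.mk p a) = φ (Polynomial.C a) := by
        simp [hφ]
      rw [← this]
      exact ha'
    have : Polynomial.C a ∈ T := by rw [← hcT]; exact hCa
    have hap : a ∈ p := heq ▸ (Ideal.mem_comap.2 this)
    exact Ideal.Quotient.eq_zero_iff_mem.2 hap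
  exact stmt16_no_three_primes_fiber _ _ _ hP' hQ' hT' l1 l2 hTc

end KeyLemma

section DimBound

open Polynomial

lemma stmt16_ringKrullDim_polynomial_le {R : Type*} [CommRing R] {d : ℕ}
    (h : ringKrullDim R ≤ (d : ℕ)) :
    ringKrullDim R[X] ≤ ((2 * d + 1 : ℕ) : WithBot (WithTop ℕ)) := by
  unfold ringKrullDim Order.krullDim
  refine iSup_le (fun q => ?_)
  by_contra hlen
  have hlen' : 2 * d + 2 ≤ q.length := by
    by_contra h'
    push_neg at h'
    have hq1 : q.length ≤ 2 * d + 1 := by omega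
    exact hlen (WithBot.coe_le_coe.2 ((Nat.cast_le (α := WithTop ℕ)).2 hq1))
  let x : Fin (d + 2) → PrimeSpectrum R := fun i =>
    ⟨(q ⟨2 * i.val, by omega⟩).asIdeal.comap (Polynomial.C : R →+* R[X]),
      Ideal.IsPrime.comap _⟩
  have hmono : ∀ i : Fin (d + 1), x i.castSucc < x i.succ := by
    intro i
    have h2i : (2 * (i.val) + 2 : ℕ) ≤ q.length := by have := i.isLt; omega
    have key := stmt16_comap_C_lt_of_lt_of_lt
      (q ⟨2 * i.val, by omega⟩).asIdeal (q ⟨2 * i.val + 1, by omega⟩).asIdeal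
      (q ⟨2 * i.val + 2, by omega⟩).asIdeal
      (q _).isPrime (q _).isPrime (q _).isPrime
      (q.strictMono (by simp [Fin.lt_def])) (q.strictMono (by simp [Fin.lt_def]))
    have : (x i.castSucc).asIdeal < (x i.succ).asIdeal := by
      simpa [x, Fin.coe_castSucc, Fin.val_succ, Nat.mul_add] using key
    exact this
  let p : LTSeries (PrimeSpectrum R) := ⟨d + 1, x, hmono⟩
  have hle : ((d + 1 : ℕ) : WithBot (WithTop ℕ)) ≤ ringKrullDim R := by
    have := Order.LTSeries.length_le_krullDim p
    exact this
  have : ((d + 1 : ℕ) : WithBot (WithTop ℕ)) ≤ (d : ℕ) := hle.trans h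
  rw [Nat.cast_le (α := WithBot (WithTop ℕ))] at this
  omega

lemma stmt16_ringKrullDim_mvPolynomial_finite (c : ℕ) :
    ∃ d : ℕ, ringKrullDim (MvPolynomial (Fin c) ℂ) ≤ (d : ℕ) := by
  induction c with
  | zero =>
    refine ⟨0, ?_⟩
    have e : MvPolynomial (Fin 0) ℂ ≃+* ℂ := (MvPolynomial.isEmptyRingEquiv ℂ (Fin 0))
    rw [ringKrullDim_eq_of_ringEquiv e]
    simp [ringKrullDim_eq_zero_of_field]
  | succ k ih =>
    obtain ⟨d, hd⟩ := ih
    refine ⟨2 * d + 1, ?_⟩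
    have e : MvPolynomial (Fin (k + 1)) ℂ ≃+* Polynomial (MvPolynomial (Fin k) ℂ) :=
      (MvPolynomial.finSuccEquiv ℂ k).toRingEquiv
    rw [ringKrullDim_eq_of_ringEquiv e]
    exact stmt16_ringKrullDim_polynomial_le hd

end DimBound

section UnionBound

variable {R : Type*} [CommRing R]

/-- Chains of primes over `K ⊇ I ⊓ J` lie over `I` or over `J`. -/
lemma stmt16_ringKrullDim_quotient_le_sup (I J K : Ideal R) (h : I ⊓ J ≤ K) :
    ringKrullDim (R ⧸ K) ≤ ringKrullDim (R ⧸ I) ⊔ ringKrullDim (R ⧸ J) := by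
  unfold ringKrullDim Order.krullDim
  refine iSup_le (fun q => ?_)
  let P : Fin (q.length + 1) → Ideal R := fun i => (q i).asIdeal.comap (Ideal.Quotient.mk K)
  have hPprime : ∀ i, (P i).IsPrime := fun i => Ideal.IsPrime.comap _
  have hPmono : ∀ {i j}, i ≤ j → P i ≤ P j := by
    intro i j hij
    have hle : (q i).asIdeal ≤ (q j).asIdeal := q.strictMono.monotone hij
    exact Ideal.comap_mono hle
  have hPstrict : ∀ {i j}, i < j → P i < P j := by
    intro i j hij
    refine lt_of_le_of_ne (hPmono hij.le) (fun hEq => ?_)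
    have := Ideal.comap_injective_of_surjective _ Ideal.Quotient.mk_surjective hEq
    exact (q.strictMono hij).ne (PrimeSpectrum.ext this)
  have hK : K ≤ P 0 := by
    intro x hx
    show Ideal.Quotient.mk K x ∈ (q 0).asIdeal
    rw [Ideal.Quotient.eq_zero_iff_mem.2 hx]
    exact Submodule.zero_mem _
  have hIJ : I ≤ P 0 ∨ J ≤ P 0 := (hPprime 0).inf_le.1 (h.trans hK)
  have main : ∀ (L : Ideal R), L ≤ P 0 →
      (↑q.length : WithBot (WithTop ℕ)) ≤ ringKrullDim (R ⧸ L) := by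
    intro L hL
    have hLi : ∀ i, L ≤ P i := fun i => hL.trans (hPmono (Fin.zero_le i))
    have hker : ∀ i, RingHom.ker (Ideal.Quotient.mk L) ≤ P i := by
      intro i; rw [Ideal.mk_ker]; exact hLi i
    have hsurj : Function.Surjective (Ideal.Quotient.mk L) := Ideal.Quotient.mk_surjective
    let y : Fin (q.length + 1) → PrimeSpectrum (R ⧸ L) := fun i =>
      ⟨(P i).map (Ideal.Quotient.mk L),
        haveI := hPprime i
        Ideal.map_isPrime_of_surjective hsurj (hker i)⟩
    have hstep : ∀ i : Fin q.length, y i.castSucc < y i.succ := by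
      intro i
      have hcomap : ∀ j,
          ((P j).map (Ideal.Quotient.mk L)).comap (Ideal.Quotient.mk L) = P j := by
        intro j
        rw [Ideal.comap_map_of_surjective _ hsurj]
        refine sup_eq_left.2 ?_
        intro x hx
        have : Ideal.Quotient.mk L x = 0 := by simpa using hx
        exact hLi j (Ideal.Quotient.eq_zero_iff_mem.1 this)
      have hlt : P i.castSucc < P i.succ := hPstrict (by simp [Fin.lt_def])
      refine lt_of_le_of_ne (Ideal.map_mono hlt.le) (fun hEq => hlt.ne ?_)
      rw [← hcomap i.castSucc, ← hcomap i.succ]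
      exact congrArg _ (congrArg PrimeSpectrum.asIdeal hEq)
    let p : LTSeries (PrimeSpectrum (R ⧸ L)) := ⟨q.length, y, hstep⟩
    have := Order.LTSeries.length_le_krullDim p
    exact this
  rcases hIJ with hI | hJ
  · exact le_sup_of_le_left (main I hI)
  · exact le_sup_of_le_right (main J hJ)

end UnionBound

lemma stmt16_conv_mono {a b : WithBot (WithTop ℕ)} (hab : a ≤ b) {d : ℕ} (hb : b ≤ (d : ℕ)) :
    WithTop.untopD 0 (WithBot.unbotD 0 a) ≤ WithTop.untopD 0 (WithBot.unbotD 0 b) := by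
  induction a using WithBot.recBotCoe with
  | bot => simp
  | coe x =>
    induction b using WithBot.recBotCoe with
    | bot => simp at hab
    | coe y =>
      have hxy : x ≤ y := WithBot.coe_le_coe.1 hab
      have hyd : y ≤ (d : WithTop ℕ) := by exact_mod_cast hb
      have hy : y ≠ ⊤ := fun h => by simp [h] at hyd
      have hx : x ≠ ⊤ := fun h => hy (top_le_iff.1 (h ▸ hxy))
      lift y to ℕ using hy
      lift x to ℕ using hx
      exact (by exact_mod_cast hxy : x ≤ y)

lemma stmt16_span_eq {σ : Type} (S : Set (σ → ℂ)) :
    Ideal.span {p : MvPolynomial σ ℂ | ∀ x ∈ S, MvPolynomial.eval x p = 0}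
      = MvPolynomial.vanishingIdeal ℂ S := by
  have : {p : MvPolynomial σ ℂ | ∀ x ∈ S, MvPolynomial.eval x p = 0}
      = ((MvPolynomial.vanishingIdeal ℂ S : Ideal (MvPolynomial σ ℂ)) : Set (MvPolynomial σ ℂ)) :=
    rfl
  rw [this, Ideal.span_eq]

/-- Dimension of a subset `S ⊆ ℂ^σ`: Krull dimension of the coordinate ring of its closure. -/
noncomputable def adim {σ : Type} (S : Set (σ → ℂ)) : ℕ :=
  (WithTop.untopD 0 (WithBot.unbotD 0 (ringKrullDim ((MvPolynomial σ ℂ) ⧸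
      Ideal.span {p : MvPolynomial σ ℂ | ∀ x ∈ S, MvPolynomial.eval x p = 0}))))

/-- A step in the proof of Proposition 3.5 (case 4): let `E = [[0, H], [G, D]]` be a space
of matrices of linear forms with zero top-left `κ×κ'` block and `G` 1-generic. If
`codim E_r ≤ n` and `κ' ≥ r + 1 > s`, then `codim_G G_{s-1} ≤ n` or `codim_H H_{r-s} ≤ n`. -/
theorem stmt16 (κ κ' s t r n c : ℕ)
    (H : Matrix (Fin κ) (Fin t) (MvPolynomial (Fin c) ℂ))
    (G : Matrix (Fin s) (Fin κ') (MvPolynomial (Fin c) ℂ))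
    (D : Matrix (Fin s) (Fin t) (MvPolynomial (Fin c) ℂ))
    (hlinH : ∀ i j, (H i j).IsHomogeneous 1)
    (hlinG : ∀ i j, (G i j).IsHomogeneous 1)
    (hlinD : ∀ i j, (D i j).IsHomogeneous 1)
    (hGgen : ∀ (u : Fin s → ℂ) (v : Fin κ' → ℂ), u ≠ 0 → v ≠ 0 →
      (∑ i, ∑ j, MvPolynomial.C (u i) * MvPolynomial.C (v j) * G i j) ≠ 0)
    (hs : s < r + 1) (hκ' : r + 1 ≤ κ')
    (hcodim : c ≤ adim {x : Fin c → ℂ |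
      ((Matrix.fromBlocks 0 H G D).map (MvPolynomial.eval x)).rank ≤ r} + n) :
    c ≤ adim {x : Fin c → ℂ | (G.map (MvPolynomial.eval x)).rank ≤ s - 1} + n ∨
    c ≤ adim {x : Fin c → ℂ | (H.map (MvPolynomial.eval x)).rank ≤ r - s} + n := by
  classical
  set SE : Set (Fin c → ℂ) := {x : Fin c → ℂ |
    ((Matrix.fromBlocks 0 H G D).map (MvPolynomial.eval x)).rank ≤ r} with hSE
  set SA : Set (Fin c → ℂ) :=
    {x : Fin c → ℂ | (G.map (MvPolynomial.eval x)).rank ≤ s - 1} with hSA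
  set SB : Set (Fin c → ℂ) :=
    {x : Fin c → ℂ | (H.map (MvPolynomial.eval x)).rank ≤ r - s} with hSB
  -- the set-theoretic inclusion E_r ⊆ G_{s-1} ∪ H_{r-s}
  have hsub : SE ⊆ SA ∪ SB := by
    intro x hx
    have hEmap : (Matrix.fromBlocks 0 H G D).map (MvPolynomial.eval x)
        = Matrix.fromBlocks 0 (H.map (MvPolynomial.eval x)) (G.map (MvPolynomial.eval x))
            (D.map (MvPolynomial.eval x)) := by
      rw [Matrix.fromBlocks_map]
      congr 1
    have hrankE : ((Matrix.fromBlocks 0 H G D).map (MvPolynomial.eval x)).rank ≤ r := hx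
    rw [hEmap] at hrankE
    have hsum : (G.map (MvPolynomial.eval x)).rank + (H.map (MvPolynomial.eval x)).rank ≤ r :=
      le_trans (stmt16_rank_add_rank_le_rank_fromBlocks _ _ _) hrankE
    by_cases hg : (G.map (MvPolynomial.eval x)).rank ≤ s - 1
    · exact Or.inl hg
    · refine Or.inr ?_
      show (H.map (MvPolynomial.eval x)).rank ≤ r - s
      omega
  -- pass to vanishing ideals
  have hinf : MvPolynomial.vanishingIdeal ℂ SA ⊓ MvPolynomial.vanishingIdeal ℂ SB
      ≤ MvPolynomial.vanishingIdeal ℂ SE := by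
    rintro p ⟨hpA, hpB⟩
    intro x hxE
    rcases hsub hxE with hxA | hxB
    · exact hpA x hxA
    · exact hpB x hxB
  obtain ⟨d, hd⟩ := stmt16_ringKrullDim_mvPolynomial_finite c
  have hdquot : ∀ (I : Ideal (MvPolynomial (Fin c) ℂ)),
      ringKrullDim (MvPolynomial (Fin c) ℂ ⧸ I) ≤ (d : ℕ) :=
    fun I => (ringKrullDim_quotient_le I).trans hd
  have hEsup := stmt16_ringKrullDim_quotient_le_sup
    (MvPolynomial.vanishingIdeal ℂ SA) (MvPolynomial.vanishingIdeal ℂ SB)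
    (MvPolynomial.vanishingIdeal ℂ SE) hinf
  rcases le_sup_iff.1 hEsup with hcase | hcase
  · left
    have hmono : adim SE ≤ adim SA := by
      unfold adim
      rw [stmt16_span_eq, stmt16_span_eq]
      exact stmt16_conv_mono hcase (hdquot _)
    omega
  · right
    have hmono : adim SE ≤ adim SB := by
      unfold adim
      rw [stmt16_span_eq, stmt16_span_eq]
      exact stmt16_conv_mono hcase (hdquot _)
    omega
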